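/- If X and Y are square-free words of lengths 4 and 6 respectively, then there exist a length-2 factor a1 a2 of X and a length-2 factor b1 b2 of Y such that a1 ∉ {b1, b2} and b2 ∉ {a1, a2}. -/
import Mathlib


/-- A word is square-free if it contains no factor `U ++ U` with `U` nonempty. -/
def SquareFreeWord {α : Type*} (W : List α) : Prop :=
  ∀ U P Q : List α, U ≠ [] → W ≠ P ++ (U ++ U) ++ Q

/-- Generic case: `X = [a,b,c,d]` with `a≠c`, `b≠d`. -/
private theorem step_gen {α : Type*} {x1 x2 x3 x4 u v : α}
    (h12 : x1 ≠ x2) (h23 : x2 ≠ x3) (h34 : x3 ≠ x4) (h13 : x1 ≠ x3) (h24 : x2 ≠ x4)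
    (huv : u ≠ v)
    (b1 : x1 = u ∨ x1 = v ∨ v = x1 ∨ v = x2)
    (b2 : x2 = u ∨ x2 = v ∨ v = x2 ∨ v = x3)
    (b3 : x3 = u ∨ x3 = v ∨ v = x3 ∨ v = x4) :
    (u = x3 ∧ v = x2) ∨ (u = x1 ∧ v = x3) ∨ (x1 = x4 ∧ u = x2 ∧ v = x1) := by
  rcases b1 with h|h|h|h <;> rcases b2 with g|g|g|g <;> rcases b3 with f|f|f|f <;>
    subst_vars <;> tauto

/-- Case `X = [a,b,a,c]`. -/
private theorem step_A {α : Type*} {a b c u v : α}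
    (hab : a ≠ b) (hbc : b ≠ c) (hac : a ≠ c) (huv : u ≠ v)
    (b1 : a = u ∨ a = v ∨ v = a ∨ v = b)
    (b2 : b = u ∨ b = v ∨ v = b ∨ v = a)
    (b3 : a = u ∨ a = v ∨ v = a ∨ v = c) :
    (u = a ∧ v = b) ∨ v = a := by
  rcases b1 with h|h|h|h <;> rcases b2 with g|g|g|g <;> rcases b3 with f|f|f|f <;>
    subst_vars <;> tauto

/-- Case `X = [a,b,c,b]`. -/
private theorem step_B {α : Type*} {a b c u v : α}
    (hab : a ≠ b) (hbc : b ≠ c) (hac : a ≠ c) (huv : u ≠ v)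
    (b1 : a = u ∨ a = v ∨ v = a ∨ v = b)
    (b2 : b = u ∨ b = v ∨ v = b ∨ v = c)
    (b3 : c = u ∨ c = v ∨ v = c ∨ v = b) :
    (u = a ∧ v = c) ∨ v = b := by
  rcases b1 with h|h|h|h <;> rcases b2 with g|g|g|g <;> rcases b3 with f|f|f|f <;>
    subst_vars <;> tauto

theorem xy_lemma {α : Type*} (X Y : List α)
    (hX : X.length = 4) (hY : Y.length = 6)
    (hXsf : SquareFreeWord X) (hYsf : SquareFreeWord Y) :
    ∃ a1 a2 b1 b2 : α,
      (∃ P Q : List α, X = P ++ [a1, a2] ++ Q) ∧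
      (∃ P Q : List α, Y = P ++ [b1, b2] ++ Q) ∧
      a1 ≠ b1 ∧ a1 ≠ b2 ∧ b2 ≠ a1 ∧ b2 ≠ a2 := by
  obtain ⟨x1, x2, x3, x4, rfl⟩ : ∃ a b c d, X = [a, b, c, d] := by
    rcases X with _ | ⟨x1, X⟩; · simp at hX
    rcases X with _ | ⟨x2, X⟩; · simp at hX
    rcases X with _ | ⟨x3, X⟩; · simp at hX
    rcases X with _ | ⟨x4, X⟩; · simp at hX
    rcases X with _ | ⟨x5, X⟩; · exact ⟨x1, x2, x3, x4, rfl⟩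
    simp at hX
  obtain ⟨y1, y2, y3, y4, y5, y6, rfl⟩ :
      ∃ a b c d e f, Y = [a, b, c, d, e, f] := by
    rcases Y with _ | ⟨y1, Y⟩; · simp at hY
    rcases Y with _ | ⟨y2, Y⟩; · simp at hY
    rcases Y with _ | ⟨y3, Y⟩; · simp at hY
    rcases Y with _ | ⟨y4, Y⟩; · simp at hY
    rcases Y with _ | ⟨y5, Y⟩; · simp at hY
    rcases Y with _ | ⟨y6, Y⟩; · simp at hY
    rcases Y with _ | ⟨y7, Y⟩; · exact ⟨y1, y2, y3, y4, y5, y6, rfl⟩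
    simp at hY
  have h12 : x1 ≠ x2 := fun e => hXsf [x1] [] [x3, x4] (by simp) (by simp [e])
  have h23 : x2 ≠ x3 := fun e => hXsf [x2] [x1] [x4] (by simp) (by simp [e])
  have h34 : x3 ≠ x4 := fun e => hXsf [x3] [x1, x2] [] (by simp) (by simp [e])
  have nsq : ¬(x1 = x3 ∧ x2 = x4) := fun ⟨e1, e2⟩ =>
    hXsf [x1, x2] [] [] (by simp) (by simp [e1, e2])
  have ney1 : y1 ≠ y2 := fun e => hYsf [y1] [] [y3, y4, y5, y6] (by simp) (by simp [e])
  have ney2 : y2 ≠ y3 := fun e => hYsf [y2] [y1] [y4, y5, y6] (by simp) (by simp [e])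
  have ney3 : y3 ≠ y4 := fun e => hYsf [y3] [y1, y2] [y5, y6] (by simp) (by simp [e])
  have ney4 : y4 ≠ y5 := fun e => hYsf [y4] [y1, y2, y3] [y6] (by simp) (by simp [e])
  have ney5 : y5 ≠ y6 := fun e => hYsf [y5] [y1, y2, y3, y4] [] (by simp) (by simp [e])
  by_contra h
  have bad : ∀ a1 a2 b1 b2 : α,
      (∃ P Q : List α, [x1, x2, x3, x4] = P ++ [a1, a2] ++ Q) →
      (∃ P Q : List α, [y1, y2, y3, y4, y5, y6] = P ++ [b1, b2] ++ Q) →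
      a1 = b1 ∨ a1 = b2 ∨ b2 = a1 ∨ b2 = a2 := by
    intro a1 a2 b1 b2 hA hB
    by_contra hc
    push_neg at hc
    exact h ⟨a1, a2, b1, b2, hA, hB, hc.1, hc.2.1, hc.2.2.1, hc.2.2.2⟩
  by_cases e13 : x1 = x3
  · -- X = [x1, x2, x1, x4]
    subst e13
    have e24 : x2 ≠ x4 := fun e => nsq ⟨rfl, e⟩
    have bd : ∀ u v : α,
        (∃ P Q : List α, [y1, y2, y3, y4, y5, y6] = P ++ [u, v] ++ Q) → u ≠ v →
        (u = x1 ∧ v = x2) ∨ v = x1 := fun u v hB huv =>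
      step_A h12 e24 h34 huv
        (bad x1 x2 u v ⟨[], [x1, x4], rfl⟩ hB)
        (bad x2 x1 u v ⟨[x1], [x4], rfl⟩ hB)
        (bad x1 x4 u v ⟨[x1, x2], [], rfl⟩ hB)
    have s1 := bd y1 y2 ⟨[], [y3, y4, y5, y6], rfl⟩ ney1
    have s2 := bd y2 y3 ⟨[y1], [y4, y5, y6], rfl⟩ ney2
    have s3 := bd y3 y4 ⟨[y1, y2], [y5, y6], rfl⟩ ney3
    have s4 := bd y4 y5 ⟨[y1, y2, y3], [y6], rfl⟩ ney4
    rcases s1 with ⟨e1, e2⟩ | e2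
    · rcases s2 with ⟨f1, f2⟩ | f1
      · exact h12 (f1.symm.trans e2)
      · rcases s3 with ⟨g1, g2⟩ | g1
        · exact hYsf [x1, x2] [] [y5, y6] (by simp) (by simp [e1, e2, f1, g2])
        · exact ney3 (f1.trans g1.symm)
    · rcases s2 with ⟨f1, f2⟩ | f1
      · rcases s3 with ⟨g1, g2⟩ | g1
        · exact h12 (g1.symm.trans f2)
        · rcases s4 with ⟨k1, k2⟩ | k1
          · exact hYsf [x1, x2] [y1] [y6] (by simp) (by simp [e2, f2, g1, k2])
          · exact ney4 (g1.trans k1.symm)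
      · exact ney2 (e2.trans f1.symm)
  · by_cases e24 : x2 = x4
    · -- X = [x1, x2, x3, x2]
      subst e24
      have bd : ∀ u v : α,
          (∃ P Q : List α, [y1, y2, y3, y4, y5, y6] = P ++ [u, v] ++ Q) → u ≠ v →
          (u = x1 ∧ v = x3) ∨ v = x2 := fun u v hB huv =>
        step_B h12 h23 e13 huv
          (bad x1 x2 u v ⟨[], [x3, x2], rfl⟩ hB)
          (bad x2 x3 u v ⟨[x1], [x2], rfl⟩ hB)
          (bad x3 x2 u v ⟨[x1, x2], [], rfl⟩ hB)
      have s1 := bd y1 y2 ⟨[], [y3, y4, y5, y6], rfl⟩ ney1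
      have s2 := bd y2 y3 ⟨[y1], [y4, y5, y6], rfl⟩ ney2
      have s3 := bd y3 y4 ⟨[y1, y2], [y5, y6], rfl⟩ ney3
      rcases s1 with ⟨e1, e2⟩ | e2
      · rcases s2 with ⟨f1, f2⟩ | f1
        · exact e13 (f1.symm.trans e2)
        · rcases s3 with ⟨g1, g2⟩ | g1
          · exact h12 (g1.symm.trans f1)
          · exact ney3 (f1.trans g1.symm)
      · rcases s2 with ⟨f1, f2⟩ | f1
        · exact h12 (f1.symm.trans e2)
        · exact ney2 (e2.trans f1.symm)
    · -- X = [x1, x2, x3, x4] with x1 ≠ x3, x2 ≠ x4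
      have bd : ∀ u v : α,
          (∃ P Q : List α, [y1, y2, y3, y4, y5, y6] = P ++ [u, v] ++ Q) → u ≠ v →
          (u = x3 ∧ v = x2) ∨ (u = x1 ∧ v = x3) ∨ (x1 = x4 ∧ u = x2 ∧ v = x1) :=
        fun u v hB huv =>
        step_gen h12 h23 h34 e13 e24 huv
          (bad x1 x2 u v ⟨[], [x3, x4], rfl⟩ hB)
          (bad x2 x3 u v ⟨[x1], [x4], rfl⟩ hB)
          (bad x3 x4 u v ⟨[x1, x2], [], rfl⟩ hB)
      have s1 := bd y1 y2 ⟨[], [y3, y4, y5, y6], rfl⟩ ney1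
      have s2 := bd y2 y3 ⟨[y1], [y4, y5, y6], rfl⟩ ney2
      have s3 := bd y3 y4 ⟨[y1, y2], [y5, y6], rfl⟩ ney3
      have s4 := bd y4 y5 ⟨[y1, y2, y3], [y6], rfl⟩ ney4
      have s5 := bd y5 y6 ⟨[y1, y2, y3, y4], [], rfl⟩ ney5
      -- helper: given the value of u (= y_{j+1}), the next step is forced
      rcases s1 with ⟨e1, e2⟩ | ⟨e1, e2⟩ | ⟨ex, e1, e2⟩
      · -- y1 = x3, y2 = x2
        rcases s2 with ⟨f1, f2⟩ | ⟨f1, f2⟩ | ⟨fx, f1, f2⟩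
        · exact h23 (e2.symm.trans f1)
        · exact h12 ((e2.symm.trans f1).symm)
        · rcases s3 with ⟨g1, g2⟩ | ⟨g1, g2⟩ | ⟨gx, g1, g2⟩
          · exact e13 (f2.symm.trans g1)
          · rcases s4 with ⟨k1, k2⟩ | ⟨k1, k2⟩ | ⟨kx, k1, k2⟩
            · rcases s5 with ⟨m1, m2⟩ | ⟨m1, m2⟩ | ⟨mx, m1, m2⟩
              · exact h23 (k2.symm.trans m1)
              · exact h12 ((k2.symm.trans m1).symm)
              · exact hYsf [x3, x2, x1] [] [] (by simp)
                  (by simp [e1, e2, f2, g2, k2, m2])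
            · exact e13 ((g2.symm.trans k1).symm)
            · exact h23 ((g2.symm.trans k1).symm)
          · exact h12 ((g1.symm.trans f2).symm)
      · -- y1 = x1, y2 = x3
        rcases s2 with ⟨f1, f2⟩ | ⟨f1, f2⟩ | ⟨fx, f1, f2⟩
        · rcases s3 with ⟨g1, g2⟩ | ⟨g1, g2⟩ | ⟨gx, g1, g2⟩
          · exact h23 (f2.symm.trans g1)
          · exact h12 ((f2.symm.trans g1).symm)
          · rcases s4 with ⟨k1, k2⟩ | ⟨k1, k2⟩ | ⟨kx, k1, k2⟩
            · exact e13 (g2.symm.trans k1)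
            · rcases s5 with ⟨m1, m2⟩ | ⟨m1, m2⟩ | ⟨mx, m1, m2⟩
              · exact hYsf [x1, x3, x2] [] [] (by simp)
                  (by simp [e1, e2, f2, g2, k2, m2])
              · exact e13 ((k2.symm.trans m1).symm)
              · exact h23 ((k2.symm.trans m1).symm)
            · exact h12 (g2.symm.trans k1)
        · exact e13 (f1.symm.trans e2)
        · exact h23 ((e2.symm.trans f1).symm)
      · -- x1 = x4, y1 = x2, y2 = x1
        rcases s2 with ⟨f1, f2⟩ | ⟨f1, f2⟩ | ⟨fx, f1, f2⟩
        · exact e13 ((f1.symm.trans e2).symm)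
        · rcases s3 with ⟨g1, g2⟩ | ⟨g1, g2⟩ | ⟨gx, g1, g2⟩
          · rcases s4 with ⟨k1, k2⟩ | ⟨k1, k2⟩ | ⟨kx, k1, k2⟩
            · exact h23 (g2.symm.trans k1)
            · exact h12 ((g2.symm.trans k1).symm)
            · rcases s5 with ⟨m1, m2⟩ | ⟨m1, m2⟩ | ⟨mx, m1, m2⟩
              · exact e13 (k2.symm.trans m1)
              · exact hYsf [x2, x1, x3] [] [] (by simp)
                  (by simp [e1, e2, f2, g2, k2, m2])
              · exact h12 (k2.symm.trans m1)
          · exact e13 (g1.symm.trans f2)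
          · exact h23 ((f2.symm.trans g1).symm)
        · exact h12 (e2.symm.trans f1)
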